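/- Iteration lemma, part (i) (Lemma 2.5(i)). Let {a_i}_{i=0}^∞ be a sequence of nonnegative real numbers, let k ≥ 0 be an integer, and define A_i^k = max{a_i, a_{i+1}, …, a_{i+k}} for i = 0, 1, …. Let D ≥ 0 be a constant. If a_{i+1+k} ≤ (1/8) A_i^k + D for all i = 0, 1, …, then for every i ≥ k+1: A_i^k ≤ (1/8)^{⌊i/(k+1)⌋} · max{A_0^k, A_1^k, …, A_k^k} + ((8+k)/7) D. -/

import Mathlib

noncomputable section

/-- `A_i^k = max{a_i, a_{i+1}, …, a_{i+k}}`. -/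
def Amax (a : ℕ → ℝ) (k i : ℕ) : ℝ :=
  (Finset.range (k + 1)).sup' Finset.nonempty_range_add_one fun j => a (i + j)

lemma Amax_nonneg (a : ℕ → ℝ) (ha : ∀ i, 0 ≤ a i) (k i : ℕ) : 0 ≤ Amax a k i := by
  refine le_trans (ha (i + 0)) ?_
  exact Finset.le_sup' (fun j => a (i + j)) (Finset.mem_range.mpr (Nat.succ_pos k))

lemma iteration_aux (a : ℕ → ℝ) (ha : ∀ i, 0 ≤ a i) (k : ℕ) (D : ℝ) (hD : 0 ≤ D)
    (hiter : ∀ i, a (i + 1 + k) ≤ (1 / 8) * Amax a k i + D) :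
    ∀ i, Amax a k i ≤
        (1 / 8 : ℝ) ^ (i / (k + 1)) *
            ((Finset.range (k + 1)).sup' Finset.nonempty_range_add_one fun j => Amax a k j)
          + (8 + k : ℝ) / 7 * D := by
  set M := (Finset.range (k + 1)).sup' Finset.nonempty_range_add_one fun j => Amax a k j with hM
  have hM0 : 0 ≤ M := by
    refine le_trans (Amax_nonneg a ha k 0) ?_
    exact Finset.le_sup' (fun j => Amax a k j) (Finset.mem_range.mpr (Nat.succ_pos k))
  have hk0 : (0:ℝ) ≤ (k:ℝ) := Nat.cast_nonneg k
  intro i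
  induction i using Nat.strong_induction_on with
  | _ i ih =>
    by_cases hik : i < k + 1
    · have h1 : i / (k + 1) = 0 := Nat.div_eq_of_lt hik
      rw [h1, pow_zero, one_mul]
      have hle : Amax a k i ≤ M :=
        Finset.le_sup' (fun j => Amax a k j) (Finset.mem_range.mpr hik)
      nlinarith [mul_nonneg (by positivity : (0:ℝ) ≤ (8 + (k:ℝ)) / 7) hD]
    · push_neg at hik
      set e := i / (k + 1) with he
      have he1 : 1 ≤ e := (Nat.one_le_div_iff (Nat.succ_pos k)).mpr hik
      show Amax a k i ≤ _
      refine Finset.sup'_le _ _ ?_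
      intro j hj
      have hj' : j < k + 1 := Finset.mem_range.mp hj
      set m := i + j - (k + 1) with hm
      have hmeq : m + 1 + k = i + j := by omega
      have hmi : m < i := by omega
      have hdiv : e - 1 ≤ m / (k + 1) := by
        have h2 : (i - (k + 1)) / (k + 1) ≤ m / (k + 1) := Nat.div_le_div_right (by omega)
        have h3 : (i - (k + 1)) / (k + 1) + 1 = e := by
          rw [he]
          conv_rhs => rw [← Nat.sub_add_cancel hik]
          rw [Nat.add_div_right _ (Nat.succ_pos k)]
        omega
      have hpow : (1 / 8 : ℝ) ^ (m / (k + 1)) ≤ (1 / 8 : ℝ) ^ (e - 1) :=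
        pow_le_pow_of_le_one (by norm_num) (by norm_num) hdiv
      have hIH := ih m hmi
      have hit := hiter m
      rw [hmeq] at hit
      have hA : Amax a k m ≤ (1 / 8 : ℝ) ^ (e - 1) * M + (8 + (k:ℝ)) / 7 * D := by
        calc Amax a k m ≤ (1 / 8 : ℝ) ^ (m / (k + 1)) * M + (8 + (k:ℝ)) / 7 * D := hIH
          _ ≤ _ := by gcongr
      have hpe : (1 / 8 : ℝ) ^ e = (1 / 8) * (1 / 8 : ℝ) ^ (e - 1) := by
        rw [← pow_succ']
        congr 1
        omega
      calc a (i + j) ≤ (1 / 8) * Amax a k m + D := hit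
        _ ≤ (1 / 8) * ((1 / 8 : ℝ) ^ (e - 1) * M + (8 + (k:ℝ)) / 7 * D) + D := by linarith
        _ ≤ (1 / 8 : ℝ) ^ e * M + (8 + (k:ℝ)) / 7 * D := by rw [hpe]; nlinarith

/-- Iteration lemma, part (i) (Lemma 2.5(i)). -/
theorem iteration_lemma_part_i
    (a : ℕ → ℝ) (ha : ∀ i, 0 ≤ a i) (k : ℕ) (D : ℝ) (hD : 0 ≤ D)
    (hiter : ∀ i, a (i + 1 + k) ≤ (1 / 8) * Amax a k i + D) :
    ∀ i, k + 1 ≤ i →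
      Amax a k i ≤
        (1 / 8 : ℝ) ^ (i / (k + 1)) *
            ((Finset.range (k + 1)).sup' Finset.nonempty_range_add_one fun j => Amax a k j)
          + (8 + k : ℝ) / 7 * D := fun i _ => iteration_aux a ha k D hD hiter i
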